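/- Let A be a finite d-regular λ-expander and f : A → {0,1} with |E_a[(−1)^{f(a)}]| ≤ √λ. With h_k as the expectation over k-step walks from a of (−1)^{⊕f(a_i)}, the second moment satisfies E_a[h_k(a)²] ≤ (4λ)^{k−1} for all k ≥ 1. -/

import Mathlib

set_option maxHeartbeats 1000000


open Finset

noncomputable def expec {V : Type*} [Fintype V] (f : V → ℝ) : ℝ :=
  (∑ a, f a) / (Fintype.card V : ℝ)

noncomputable def sdev {V : Type*} [Fintype V] (f : V → ℝ) : ℝ :=
  Real.sqrt (expec (fun a => f a ^ 2) - (expec f) ^ 2)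

noncomputable def edgeE {V : Type*} [Fintype V] {d : ℕ} (N : V → Fin d → V)
    (F : V → V → ℝ) : ℝ :=
  (∑ a, ∑ i, F a (N a i)) / ((Fintype.card V : ℝ) * d)

/-- `A` is a `lam`-expander in the mixing-lemma sense. -/
def IsExpander {V : Type*} [Fintype V] {d : ℕ} (N : V → Fin d → V) (lam : ℝ) : Prop :=
  ∀ f g : V → ℝ,
    |edgeE N (fun a a' => f a * g a') - expec f * expec g| ≤ lam * sdev f * sdev g

/-- The graph given by the rotation map `N` is undirected (the edge multiset is symmetric). -/
def SymmGraph {V : Type*} [Fintype V] {d : ℕ} (N : V → Fin d → V) : Prop :=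
  ∀ F : V → V → ℝ, (∑ a, ∑ i, F a (N a i)) = ∑ a, ∑ i, F (N a i) a

noncomputable def hWalk {V : Type*} {d : ℕ} (N : V → Fin d → V) (f : V → Bool) :
    ℕ → V → ℝ
  | 0, _ => 1
  | k + 1, a => (if f a then (-1 : ℝ) else 1) * ((∑ i, hWalk N f k (N a i)) / d)

section Aux

variable {V : Type*} [Fintype V] [Nonempty V] {d : ℕ}

lemma aux_card_pos : (0 : ℝ) < (Fintype.card V : ℝ) := by
  exact_mod_cast Fintype.card_pos

lemma aux_var_nonneg (f : V → ℝ) : (expec f) ^ 2 ≤ expec (fun a => f a ^ 2) := by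
  have hn : (0:ℝ) < (Fintype.card V : ℝ) := aux_card_pos
  have h : (∑ a, f a) ^ 2 ≤ (Fintype.card V : ℝ) * ∑ a, f a ^ 2 := by
    have := sq_sum_le_card_mul_sum_sq (s := (univ : Finset V)) (f := f)
    simpa using this
  unfold expec
  rw [div_pow, div_le_div_iff₀ (by positivity) hn]
  calc (∑ a, f a) ^ 2 * (Fintype.card V : ℝ)
      ≤ ((Fintype.card V : ℝ) * ∑ a, f a ^ 2) * (Fintype.card V : ℝ) :=
        mul_le_mul_of_nonneg_right h hn.le
    _ = (∑ a, f a ^ 2) * (Fintype.card V : ℝ) ^ 2 := by ring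

lemma aux_sdev_sq (f : V → ℝ) :
    sdev f ^ 2 = expec (fun a => f a ^ 2) - (expec f) ^ 2 :=
  Real.sq_sqrt (sub_nonneg.2 (aux_var_nonneg f))

lemma aux_sdev_nonneg (f : V → ℝ) : 0 ≤ sdev f := Real.sqrt_nonneg _

lemma aux_sdev_le (f : V → ℝ) :
    sdev f ≤ Real.sqrt (expec (fun a => f a ^ 2)) := by
  apply Real.sqrt_le_sqrt
  have := aux_var_nonneg f
  have h2 : (expec f) ^ 2 ≥ 0 := sq_nonneg _
  linarith

lemma aux_expec_le (f : V → ℝ) (c : ℝ) (h : ∀ a, f a ≤ c) : expec f ≤ c := by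
  have hn : (0:ℝ) < (Fintype.card V : ℝ) := aux_card_pos
  unfold expec
  rw [div_le_iff₀ hn]
  calc (∑ a, f a) ≤ ∑ _a : V, c := Finset.sum_le_sum (fun a _ => h a)
    _ = c * (Fintype.card V : ℝ) := by simp [mul_comm]

lemma aux_expec_const (c : ℝ) : expec (fun _ : V => c) = c := by
  have hn : (0:ℝ) < (Fintype.card V : ℝ) := aux_card_pos
  unfold expec
  field_simp
  simp

lemma aux_expec_avg (hd : 0 < d) {N : V → Fin d → V} (hsymm : SymmGraph N) (g : V → ℝ) :
    expec (fun a => (∑ i, g (N a i)) / d) = expec g := by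
  unfold expec
  congr 1
  rw [← Finset.sum_div]
  have h := hsymm (fun _ b => g b)
  rw [h]
  simp only [Finset.sum_const, Finset.card_univ, nsmul_eq_mul, Fintype.card_fin]
  rw [← Finset.mul_sum, mul_div_cancel_left₀ _ (by exact_mod_cast hd.ne' : (d:ℝ) ≠ 0)]

lemma aux_edgeE_mul (hd : 0 < d) (N : V → Fin d → V) (g h : V → ℝ) :
    edgeE N (fun a a' => g a * h a') =
      expec (fun a => g a * ((∑ i, h (N a i)) / d)) := by
  unfold edgeE expec
  have h1 : (∑ a, g a * ((∑ i, h (N a i)) / d)) = (∑ a, ∑ i, g a * h (N a i)) / d := by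
    rw [Finset.sum_div]
    apply Finset.sum_congr rfl
    intro a _
    rw [← mul_div_assoc, Finset.mul_sum]
  rw [h1, div_div, mul_comm (d : ℝ) _]

lemma aux_hWalk_abs (N : V → Fin d → V) (f : V → Bool) (hd : 0 < d) :
    ∀ k a, |hWalk N f k a| ≤ 1 := by
  intro k
  induction k with
  | zero => intro a; simp [hWalk]
  | succ k ih =>
    intro a
    show |(if f a then (-1 : ℝ) else 1) * ((∑ i, hWalk N f k (N a i)) / d)| ≤ 1
    rw [abs_mul]
    have h1 : |if f a then (-1 : ℝ) else 1| = 1 := by split <;> simp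
    rw [h1, one_mul, abs_div, abs_of_nonneg (by positivity : (0:ℝ) ≤ (d : ℝ)),
      div_le_one (by exact_mod_cast hd)]
    calc |∑ i, hWalk N f k (N a i)| ≤ ∑ i, |hWalk N f k (N a i)| :=
          Finset.abs_sum_le_sum_abs _ _
      _ ≤ ∑ _i : Fin d, (1:ℝ) := Finset.sum_le_sum (fun i _ => ih (N a i))
      _ = d := by simp

lemma aux_hWalk_succ_sq (N : V → Fin d → V) (f : V → Bool) (k : ℕ) (a : V) :
    (hWalk N f (k+1) a) ^ 2 = ((∑ i, hWalk N f k (N a i)) / d) ^ 2 := by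
  show ((if f a then (-1 : ℝ) else 1) * ((∑ i, hWalk N f k (N a i)) / d)) ^ 2 = _
  split <;> ring

lemma aux_hWalk_one (N : V → Fin d → V) (f : V → Bool) (hd : 0 < d) (a : V) :
    hWalk N f 1 a = (if f a then (-1 : ℝ) else 1) := by
  show (if f a then (-1 : ℝ) else 1) * ((∑ _i : Fin d, (1:ℝ)) / d) = _
  have : (∑ _i : Fin d, (1:ℝ)) = (d : ℝ) := by simp
  rw [this, div_self (by exact_mod_cast hd.ne'), mul_one]

end Aux

/-- Second moment bound for the walk-XOR function: E_a[h_k(a)²] ≤ (4lam)^{k-1}. -/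
theorem stmt3 {V : Type*} [Fintype V] [Nonempty V] {d : ℕ} (hd : 0 < d)
    (N : V → Fin d → V) (lam : ℝ) (hlam : 0 ≤ lam)
    (hexp : IsExpander N lam) (hsymm : SymmGraph N)
    (f : V → Bool)
    (hbias : |expec (fun a => if f a then (-1 : ℝ) else 1)| ≤ Real.sqrt lam) :
    ∀ k : ℕ, 1 ≤ k →
      expec (fun a => (hWalk N f k a) ^ 2) ≤ (4 * lam) ^ (k - 1) := by
  intro k hk
  by_cases hcase : 1 ≤ 4 * lam
  · -- trivial case: the bound is at least 1, and the LHS is at most 1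
    have h1 : expec (fun a => (hWalk N f k a) ^ 2) ≤ 1 := by
      apply aux_expec_le
      intro a
      have := aux_hWalk_abs N f hd k a
      nlinarith [abs_nonneg (hWalk N f k a), sq_abs (hWalk N f k a)]
    calc expec (fun a => (hWalk N f k a) ^ 2) ≤ 1 := h1
      _ ≤ (4 * lam) ^ (k - 1) := one_le_pow₀ hcase
  · push_neg at hcase
    set s := Real.sqrt lam with hs
    have hs0 : 0 ≤ s := Real.sqrt_nonneg _
    have hss : s ^ 2 = lam := Real.sq_sqrt hlam
    have h2s : (2 * s) ^ 2 = 4 * lam := by rw [mul_pow]; rw [hss]; ring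
    suffices H : ∀ m : ℕ,
        expec (fun a => (hWalk N f (m+1) a) ^ 2) ≤ (4 * lam) ^ m ∧
        |expec (hWalk N f (m+1))| ≤ s * (2 * s) ^ m by
      obtain ⟨m, rfl⟩ : ∃ m, k = m + 1 := ⟨k - 1, by omega⟩
      simpa using (H m).1
    intro m
    induction m with
    | zero =>
      constructor
      · have : ∀ a, (hWalk N f 1 a) ^ 2 = 1 := by
          intro a
          rw [aux_hWalk_one N f hd a]
          split <;> norm_num
        calc expec (fun a => (hWalk N f 1 a) ^ 2)
            = expec (fun _ : V => (1:ℝ)) := by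
              apply congrArg; funext a; rw [this a]
          _ = 1 := aux_expec_const 1
          _ ≤ (4 * lam) ^ 0 := by norm_num
      · have : hWalk N f 1 = fun a => (if f a then (-1 : ℝ) else 1) := by
          funext a; exact aux_hWalk_one N f hd a
        rw [this]
        simpa using hbias
    | succ m ih =>
      obtain ⟨ihS, ihB⟩ := ih
      set g := hWalk N f (m+1) with hg
      set Pg := fun a => (∑ i, g (N a i)) / (d : ℝ) with hPg
      have hsqrtS : Real.sqrt (expec (fun a => g a ^ 2)) ≤ (2 * s) ^ m := by
        have h1 : ((2 * s) ^ m) ^ 2 = (4 * lam) ^ m := by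
          rw [← pow_mul, mul_comm m 2, pow_mul, h2s]
        calc Real.sqrt (expec (fun a => g a ^ 2))
            ≤ Real.sqrt ((4 * lam) ^ m) := Real.sqrt_le_sqrt ihS
          _ = (2 * s) ^ m := by
              rw [← h1, Real.sqrt_sq (by positivity)]
      have hsdevg : sdev g ≤ (2 * s) ^ m := le_trans (aux_sdev_le g) hsqrtS
      have hEPg : expec Pg = expec g := aux_expec_avg hd hsymm g
      constructor
      · -- second moment part
        have heq : expec (fun a => (hWalk N f (m+2) a) ^ 2) =
            expec (fun a => Pg a ^ 2) := by
          apply congrArg; funext a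
          exact aux_hWalk_succ_sq N f (m+1) a
        rw [heq]
        have hedge : edgeE N (fun a a' => Pg a * g a') =
            expec (fun a => Pg a ^ 2) := by
          rw [aux_edgeE_mul hd N Pg g]
          apply congrArg; funext a
          rw [hPg]; ring
        have hmix := hexp Pg g
        rw [hedge, hEPg] at hmix
        set S := expec (fun a => Pg a ^ 2) with hS
        set μ := expec g with hμ
        have ht2 : sdev Pg ^ 2 = S - μ ^ 2 := by
          rw [aux_sdev_sq Pg, hEPg]
        have hmix' : S - μ ^ 2 ≤ lam * sdev Pg * sdev g := by
          have : S - μ * μ ≤ |S - μ * μ| := le_abs_self _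
          nlinarith [hmix]
        -- from t² ≤ lam * t * sg, conclude t² ≤ lam² * sg²
        obtain ⟨t, ht0, ht2', hmix2⟩ : ∃ t : ℝ, 0 ≤ t ∧ t ^ 2 = S - μ ^ 2 ∧
            S - μ ^ 2 ≤ lam * t * sdev g :=
          ⟨sdev Pg, aux_sdev_nonneg Pg, ht2, hmix'⟩
        obtain ⟨u, hu0, hu2⟩ : ∃ u : ℝ, 0 ≤ u ∧ sdev g ≤ u ∧ True := ⟨sdev g,
          aux_sdev_nonneg g, le_refl _, trivial⟩
        have ht : S - μ ^ 2 ≤ lam ^ 2 * sdev g ^ 2 := by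
          nlinarith [sq_nonneg (t - lam * sdev g), ht0,
            aux_sdev_nonneg g, mul_nonneg hlam (aux_sdev_nonneg g)]
        have hsg2 : sdev g ^ 2 ≤ (4 * lam) ^ m := by
          have := aux_sdev_sq g
          have h2 := ihS
          nlinarith [sq_nonneg (expec g)]
        have hμ2 : μ ^ 2 ≤ lam * (4 * lam) ^ m := by
          have h1 : μ ^ 2 ≤ (s * (2 * s) ^ m) ^ 2 := by
            have := ihB
            nlinarith [abs_nonneg μ, sq_abs μ]
          have h2 : (s * (2 * s) ^ m) ^ 2 = lam * (4 * lam) ^ m := by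
            rw [mul_pow, hss, ← pow_mul, mul_comm m 2, pow_mul, h2s]
          linarith [h1, h2.le]
        have hpow : (0:ℝ) ≤ (4 * lam) ^ m := by positivity
        have : S ≤ (lam ^ 2 + lam) * (4 * lam) ^ m := by nlinarith
        calc S ≤ (lam ^ 2 + lam) * (4 * lam) ^ m := this
          _ ≤ (4 * lam) * (4 * lam) ^ m := by nlinarith
          _ = (4 * lam) ^ (m + 1) := by ring
      · -- bias part
        set χ := fun a => (if f a then (-1 : ℝ) else 1) with hχ
        have heq : expec (hWalk N f (m+2)) = edgeE N (fun a a' => χ a * g a') := by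
          rw [aux_edgeE_mul hd N χ g]
          rfl
        have hmix := hexp χ g
        have hsdevχ : sdev χ ≤ 1 := by
          have h1 : expec (fun a => χ a ^ 2) = 1 := by
            have : ∀ a, χ a ^ 2 = 1 := by intro a; simp only [hχ]; split <;> norm_num
            calc expec (fun a => χ a ^ 2) = expec (fun _ : V => (1:ℝ)) := by
                  apply congrArg; funext a; rw [this a]
              _ = 1 := aux_expec_const 1
          calc sdev χ ≤ Real.sqrt (expec (fun a => χ a ^ 2)) := aux_sdev_le χ
            _ = 1 := by rw [h1, Real.sqrt_one]
        have habsχ : |expec χ| ≤ s := hbias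
        rw [heq]
        have h1 : |edgeE N (fun a a' => χ a * g a')| ≤
            |expec χ * expec g| + lam * sdev χ * sdev g := by
          have := abs_add_le (edgeE N (fun a a' => χ a * g a') - expec χ * expec g)
            (expec χ * expec g)
          simp only [sub_add_cancel] at this
          linarith [hmix]
        have h2 : |expec χ * expec g| ≤ s * (s * (2 * s) ^ m) := by
          rw [abs_mul]
          exact mul_le_mul habsχ ihB (abs_nonneg _) hs0
        have h3 : lam * sdev χ * sdev g ≤ lam * (2 * s) ^ m := by
          have hsd : 0 ≤ sdev g := aux_sdev_nonneg g
          calc lam * sdev χ * sdev g ≤ lam * 1 * sdev g := by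
                apply mul_le_mul_of_nonneg_right _ hsd
                exact mul_le_mul_of_nonneg_left hsdevχ hlam
            _ = lam * sdev g := by ring
            _ ≤ lam * (2 * s) ^ m := mul_le_mul_of_nonneg_left hsdevg hlam
        have hgoal : s * (s * (2 * s) ^ m) + lam * (2 * s) ^ m =
            s * (2 * s) ^ (m + 1) := by
          rw [← hss]; ring
        calc |edgeE N (fun a a' => χ a * g a')|
            ≤ |expec χ * expec g| + lam * sdev χ * sdev g := h1
          _ ≤ s * (s * (2 * s) ^ m) + lam * (2 * s) ^ m := by linarith
          _ = s * (2 * s) ^ (m + 1) := hgoal
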